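/- For every vertex x of G, every natural number t, and all vertices z, z' with d(x,z) = d(x,z'), one has s_t(x)(z) = s_t(x)(z'); that is, the coordinate s_t(x)(z) depends only on the distance d(x,z). -/
import Mathlib


open scoped Classical

/-- `Φ⁻ₓ`: apply the reflection at every vertex at odd distance from `x`. -/
noncomputable def phiOdd {V : Type*} (G : SimpleGraph V) (x : V) (a : V → ℤ) : V → ℤ :=
  fun z => if Odd (G.dist x z) then -a z + ∑ᶠ w ∈ G.neighborSet z, a w else a z

/-- `Φ⁺ₓ`: apply the reflection at every vertex at even distance from `x`. -/
noncomputable def phiEven {V : Type*} (G : SimpleGraph V) (x : V) (a : V → ℤ) : V → ℤ :=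
  fun z => if Even (G.dist x z) then -a z + ∑ᶠ w ∈ G.neighborSet z, a w else a z

/-- The Fibonacci vectors `s_t(x)`: `s_0(x) = δ_x`, `s_{t+1}(x) = Φ⁻ₓ s_t(x)` for even `t`
and `s_{t+1}(x) = Φ⁺ₓ s_t(x)` for odd `t`. -/
noncomputable def sVec {V : Type*} (G : SimpleGraph V) (x : V) : ℕ → V → ℤ
  | 0 => fun z => if z = x then 1 else 0
  | t + 1 => if Even t then phiOdd G x (sVec G x t) else phiEven G x (sVec G x t)

/-- The Fibonacci vectors `r_t(x,y)`: `r_0(x,y) = δ_x + δ_y`, `r_{t+1}(x,y) = Φ⁻ₓ r_t(x,y)`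
for even `t` and `r_{t+1}(x,y) = Φ⁺ₓ r_t(x,y)` for odd `t`. -/
noncomputable def rVec {V : Type*} (G : SimpleGraph V) (x y : V) : ℕ → V → ℤ
  | 0 => fun z => (if z = x then 1 else 0) + (if z = y then 1 else 0)
  | t + 1 => if Even t then phiOdd G x (rVec G x y t) else phiEven G x (rVec G x y t)

section Aux

open SimpleGraph Walk

variable {V : Type*} {G : SimpleGraph V}

/-- In a connected acyclic graph, adjacent vertices have different distances to `x`. -/
lemma aux_dist_ne_of_adj (hconn : G.Connected) (hacyc : G.IsAcyclic) (x z w : V)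
    (h : G.Adj z w) : G.dist x w ≠ G.dist x z := by
  intro heq
  obtain ⟨p, hp, hpl⟩ := hconn.exists_path_of_dist x w
  obtain ⟨q, hq, hql⟩ := hconn.exists_path_of_dist x z
  have hzp : z ∉ p.support := by
    intro hz
    have h1 : G.dist x z ≤ (p.takeUntil z hz).length := SimpleGraph.dist_le _
    have h2 := congrArg Walk.length (p.take_spec hz)
    rw [Walk.length_append] at h2
    have h3 : (p.dropUntil z hz).length ≠ 0 := by
      intro h0
      exact G.ne_of_adj h (Walk.eq_of_length_eq_zero h0)
    omega
  have hp' : (p.concat h.symm).IsPath := by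
    rw [← Walk.isPath_reverse_iff, Walk.reverse_concat]
    exact (Walk.cons_isPath_iff _ _).2 ⟨(Walk.isPath_reverse_iff p).2 hp,
      by simpa [Walk.support_reverse] using hzp⟩
  have huniq := hacyc.path_unique ⟨p.concat h.symm, hp'⟩ ⟨q, hq⟩
  have hlen := congrArg (fun r : G.Path x z => r.1.length) huniq
  simp only [Walk.length_concat] at hlen
  omega

lemma aux_dist_adj_cases (hconn : G.Connected) (hacyc : G.IsAcyclic) (x z w : V)
    (h : G.Adj z w) : G.dist x w + 1 = G.dist x z ∨ G.dist x w = G.dist x z + 1 := by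
  have h1 : G.dist x w ≤ G.dist x z + 1 := by
    have h3 := hconn.dist_triangle (u := x) (v := z) (w := w)
    rwa [SimpleGraph.dist_eq_one_iff_adj.mpr h] at h3
  have h2 : G.dist x z ≤ G.dist x w + 1 := by
    have h3 := hconn.dist_triangle (u := x) (v := w) (w := z)
    rwa [SimpleGraph.dist_eq_one_iff_adj.mpr h.symm] at h3
  have h3 := aux_dist_ne_of_adj hconn hacyc x z w h
  omega

/-- The unique "parent" of `z ≠ x`: the unique neighbour closer to `x`. -/
lemma aux_parent_spec (hconn : G.Connected) (hacyc : G.IsAcyclic) (x z : V)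
    (hz : G.dist x z ≠ 0) : ∃! w, G.Adj z w ∧ G.dist x w + 1 = G.dist x z := by
  have hne : z ≠ x := by
    intro h; subst h; simp [SimpleGraph.dist_self] at hz
  obtain ⟨p, hp, hpl⟩ := hconn.exists_path_of_dist x z
  obtain ⟨w, hadj, r', hr⟩ := Walk.exists_eq_cons_of_ne hne p.reverse
  have hlen : r'.length + 1 = G.dist x z := by
    have := congrArg Walk.length hr
    simp [Walk.length_reverse, hpl] at this
    omega
  have hdw : G.dist x w ≤ r'.length := by
    have := SimpleGraph.dist_le r'.reverse
    simpa [Walk.length_reverse] using this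
  refine ⟨w, ⟨hadj, ?_⟩, ?_⟩
  · rcases aux_dist_adj_cases hconn hacyc x z w hadj with h1 | h2
    · exact h1
    · omega
  · rintro w' ⟨hadj', hd'⟩
    have key : ∀ u : V, G.Adj z u → G.dist x u + 1 = G.dist x z →
        ∃ q : G.Path x z, q.1.reverse.getVert 1 = u := by
      intro u hu hdu
      obtain ⟨s, hs, hsl⟩ := hconn.exists_path_of_dist x u
      have hzs : z ∉ s.support := by
        intro hz'
        have h1 : G.dist x z ≤ (s.takeUntil z hz').length := SimpleGraph.dist_le _
        have h2 := Walk.length_takeUntil_le s hz'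
        omega
      have hs' : (s.concat hu.symm).IsPath := by
        rw [← Walk.isPath_reverse_iff, Walk.reverse_concat]
        exact (Walk.cons_isPath_iff _ _).2 ⟨(Walk.isPath_reverse_iff s).2 hs,
          by simpa [Walk.support_reverse] using hzs⟩
      refine ⟨⟨s.concat hu.symm, hs'⟩, ?_⟩
      rw [Walk.reverse_concat]
      simp [Walk.getVert_cons_succ]
    obtain ⟨q1, hq1⟩ := key w' hadj' hd'
    obtain ⟨q2, hq2⟩ := key w hadj (by
      rcases aux_dist_adj_cases hconn hacyc x z w hadj with h1 | h2
      · exact h1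
      · omega)
    rw [hacyc.path_unique q1 q2] at hq1
    rw [hq2] at hq1
    exact hq1.symm

lemma aux_sum_nbr_eq (hconn : G.Connected) (hacyc : G.IsAcyclic)
    (hreg : ∀ v : V, (G.neighborSet v).ncard = 3) (x z : V) (hz : G.dist x z ≠ 0)
    (a : V → ℤ) (b c : ℤ)
    (hb : ∀ u, G.dist x u + 1 = G.dist x z → a u = b)
    (hc : ∀ u, G.dist x u = G.dist x z + 1 → a u = c) :
    ∑ᶠ w ∈ G.neighborSet z, a w = b + 2 * c := by
  obtain ⟨p, ⟨hadj, hpd⟩, hpu⟩ := aux_parent_spec hconn hacyc x z hz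
  have hfin : (G.neighborSet z).Finite :=
    Set.finite_of_ncard_ne_zero (by rw [hreg]; norm_num)
  rw [← Set.Finite.coe_toFinset hfin, finsum_mem_coe_finset]
  have hpF : p ∈ hfin.toFinset := by
    rw [Set.Finite.mem_toFinset]; exact hadj
  have hcard : (hfin.toFinset.erase p).card = 2 := by
    rw [Finset.card_erase_of_mem hpF, ← Set.ncard_eq_toFinset_card _ hfin, hreg]
  have hrest : ∑ u ∈ hfin.toFinset.erase p, a u = 2 * c := by
    have hconst : ∀ u ∈ hfin.toFinset.erase p, a u = c := by
      intro u hu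
      have hu' : u ∈ hfin.toFinset := Finset.mem_of_mem_erase hu
      have hune : u ≠ p := Finset.ne_of_mem_erase hu
      have hadj' : G.Adj z u := by rwa [Set.Finite.mem_toFinset] at hu'
      rcases aux_dist_adj_cases hconn hacyc x z u hadj' with h1 | h2
      · exact absurd (hpu u ⟨hadj', h1⟩) hune
      · exact hc u h2
    rw [Finset.sum_congr rfl hconst, Finset.sum_const, hcard]
    ring
  rw [← Finset.add_sum_erase _ a hpF, hrest, hb p hpd]

lemma aux_exists_child (hconn : G.Connected) (hacyc : G.IsAcyclic)
    (hreg : ∀ v : V, (G.neighborSet v).ncard = 3) (x z : V) (hz : G.dist x z ≠ 0) :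
    ∃ w, G.Adj z w ∧ G.dist x w = G.dist x z + 1 := by
  obtain ⟨p, ⟨hadj, hpd⟩, hpu⟩ := aux_parent_spec hconn hacyc x z hz
  have hfin : (G.neighborSet z).Finite :=
    Set.finite_of_ncard_ne_zero (by rw [hreg]; norm_num)
  have hpF : p ∈ hfin.toFinset := by rw [Set.Finite.mem_toFinset]; exact hadj
  have hcard : (hfin.toFinset.erase p).card = 2 := by
    rw [Finset.card_erase_of_mem hpF, ← Set.ncard_eq_toFinset_card _ hfin, hreg]
  obtain ⟨w, hw⟩ := Finset.card_pos.mp (by omega : 0 < (hfin.toFinset.erase p).card)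
  have hw' : w ∈ hfin.toFinset := Finset.mem_of_mem_erase hw
  have hwne : w ≠ p := Finset.ne_of_mem_erase hw
  have hadj' : G.Adj z w := by rwa [Set.Finite.mem_toFinset] at hw'
  rcases aux_dist_adj_cases hconn hacyc x z w hadj' with h1 | h2
  · exact absurd (hpu w ⟨hadj', h1⟩) hwne
  · exact ⟨w, hadj', h2⟩

lemma aux_sum_nbr (hconn : G.Connected) (hacyc : G.IsAcyclic)
    (hreg : ∀ v : V, (G.neighborSet v).ncard = 3) (x z z' : V) (a : V → ℤ)
    (H : ∀ u u', G.dist x u = G.dist x u' → a u = a u')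
    (hd : G.dist x z = G.dist x z') :
    ∑ᶠ w ∈ G.neighborSet z, a w = ∑ᶠ w ∈ G.neighborSet z', a w := by
  by_cases hzz : z = z'
  · rw [hzz]
  have hn : G.dist x z ≠ 0 := by
    intro h0
    have h1 : x = z := hconn.dist_eq_zero_iff.mp h0
    have h2 : x = z' := hconn.dist_eq_zero_iff.mp (hd ▸ h0)
    exact hzz (h1 ▸ h2)
  have hn' : G.dist x z' ≠ 0 := hd ▸ hn
  obtain ⟨pz, ⟨hadjz, hpdz⟩, _⟩ := aux_parent_spec hconn hacyc x z hn
  obtain ⟨wz, hwadj, hwd⟩ := aux_exists_child hconn hacyc hreg x z hn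
  rw [aux_sum_nbr_eq hconn hacyc hreg x z hn a (a pz) (a wz)
      (fun u hu => H u pz (by omega)) (fun u hu => H u wz (by omega)),
    aux_sum_nbr_eq hconn hacyc hreg x z' hn' a (a pz) (a wz)
      (fun u hu => H u pz (by omega)) (fun u hu => H u wz (by omega))]

end Aux

/-- The coordinate `s_t(x)(z)` depends only on the distance `d(x,z)`: if
`d(x,z) = d(x,z')` then `s_t(x)(z) = s_t(x)(z')`. -/
theorem sVec_dist_invariant (V : Type*) (G : SimpleGraph V) (hconn : G.Connected)
    (hacyc : G.IsAcyclic) (hreg : ∀ v : V, (G.neighborSet v).ncard = 3)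
    (x : V) (t : ℕ) (z z' : V) (hd : G.dist x z = G.dist x z') :
    sVec G x t z = sVec G x t z' := by
  induction t generalizing z z' with
  | zero =>
    have e : ∀ u : V, G.dist x u = 0 ↔ u = x := fun u =>
      ⟨fun h => (hconn.dist_eq_zero_iff.mp h).symm,
       fun h => by subst h; exact SimpleGraph.dist_self⟩
    have h1 : z = x ↔ z' = x := by rw [← e, ← e, hd]
    simp only [sVec]
    by_cases h : z = x
    · rw [if_pos h, if_pos (h1.mp h)]
    · rw [if_neg h, if_neg (fun h' => h (h1.mpr h'))]
  | succ t ih =>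
    simp only [sVec]
    have hsum := aux_sum_nbr hconn hacyc hreg x z z' (sVec G x t)
      (fun u u' h => ih u u' h) hd
    by_cases ht : Even t
    · rw [if_pos ht]
      simp only [phiOdd]
      by_cases ho : Odd (G.dist x z)
      · rw [if_pos ho, if_pos (show Odd (G.dist x z') by rwa [← hd]),
          ih z z' hd, hsum]
      · rw [if_neg ho, if_neg (show ¬Odd (G.dist x z') by rwa [← hd])]
        exact ih z z' hd
    · rw [if_neg ht]
      simp only [phiEven]
      by_cases ho : Even (G.dist x z)
      · rw [if_pos ho, if_pos (show Even (G.dist x z') by rwa [← hd]),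
          ih z z' hd, hsum]
      · rw [if_neg ho, if_neg (show ¬Even (G.dist x z') by rwa [← hd])]
        exact ih z z' hd
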